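/- For every integer n ≥ 2, the identity Σ_{w=1}^{n−1} C(n−1,w)·2^{n−w}·w·C(w−1, ⌈w/2⌉−1) = (n−1)·C(2n−2, n−1) holds. Consequently, the subcube C_{n−1} = {0,1}^{n−1}×{0} ⊆ {0,1}^n has quadratic discrepancy D^{L2}(C_{n−1}) = (n/2^{n+1})·C(2n,n) − ((n−1)/2^{n−1})·C(2n−2,n−1). -/

import Mathlib

open Polynomial Finset

lemma coeff_one_add_X_sq_pow (s d : ℕ) :
    ((1 + X ^ 2 : Polynomial ℕ) ^ s).coeff d = if Even d then s.choose (d / 2) else 0 := by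
  rw [add_comm, add_pow, finset_sum_coeff]
  have h1 : ∀ k ∈ range (s+1), (((X:Polynomial ℕ)^2)^k * 1^(s-k) * (s.choose k : Polynomial ℕ)).coeff d
      = if d = 2*k then s.choose k else 0 := by
    intro k _
    rw [one_pow, mul_one, ← pow_mul, ← C_eq_natCast, coeff_mul_C, coeff_X_pow]
    split <;> simp
  rw [Finset.sum_congr rfl h1]
  rcases Nat.even_or_odd d with he | ho
  · obtain ⟨j, rfl⟩ := he
    have hj : j + j = 2 * j := by ring
    simp only [hj, if_pos (even_two_mul j), Nat.mul_div_cancel_left j (by norm_num : 0 < 2)]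
    have h2 : ∀ k ∈ range (s+1), (if 2*j = 2*k then s.choose k else 0) = if k = j then s.choose k else 0 := by
      intro k _
      congr 1
      simp only [eq_iff_iff]
      omega
    rw [Finset.sum_congr rfl h2, Finset.sum_ite_eq' (range (s+1)) j]
    by_cases hjs : j ∈ range (s+1)
    · simp [hjs]
    · rw [if_neg hjs, mem_range] at *
      rw [Nat.choose_eq_zero_of_lt (by omega)]
  · rw [if_neg (Nat.not_even_iff_odd.mpr ho)]
    apply Finset.sum_eq_zero
    intro k _
    rw [if_neg]
    rintro rfl
    exact (Nat.not_even_iff_odd.mpr ho) (even_two_mul k)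

lemma trinom (M r : ℕ) (h : M ≤ r) :
    (2*M).choose r = ∑ w ∈ range (M+1),
      M.choose w * 2^w * (if Even (r - w) then (M-w).choose ((r-w)/2) else 0) := by
  have h1 : ((1 + X : Polynomial ℕ)^(2*M)).coeff r = (2*M).choose r := by
    rw [coeff_one_add_X_pow, Nat.cast_id]
  have h2 : ((1:Polynomial ℕ) + X)^(2*M) = ((2*X) + (1 + X^2))^M := by
    rw [pow_mul]; congr 1; ring
  rw [← h1, h2, add_pow, finset_sum_coeff]
  apply Finset.sum_congr rfl
  intro w hw
  rw [mem_range] at hw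
  have hwr : w ≤ r := le_trans (by omega) h
  have h3 : ((2*X:Polynomial ℕ))^w * (1+X^2)^(M-w) * (M.choose w : Polynomial ℕ)
      = ((M.choose w * 2^w : ℕ) : Polynomial ℕ) * (X^w * (1+X^2)^(M-w)) := by
    push_cast
    ring
  rw [h3, natCast_mul, coeff_smul, smul_eq_mul, coeff_X_pow_mul', if_pos hwr,
    coeff_one_add_X_sq_pow]

lemma S_eq (M : ℕ) :
    ∑ k ∈ range (M+1), M.choose k * 2^(M-k) * k.choose (k/2) = (2*M+1).choose (M+1) := by
  have key : (2*M+1).choose (M+1)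
      = ∑ w ∈ range (M+1), M.choose w * 2^w * (M-w).choose ((M-w)/2) := by
    calc (2*M+1).choose (M+1) = (2*M).choose M + (2*M).choose (M+1) :=
          Nat.choose_succ_succ (2*M) M
      _ = ∑ w ∈ range (M+1), (M.choose w * 2^w * (if Even (M - w) then (M-w).choose ((M-w)/2) else 0)
            + M.choose w * 2^w * (if Even (M+1 - w) then (M-w).choose ((M+1-w)/2) else 0)) := by
          rw [Finset.sum_add_distrib, ← trinom M M le_rfl, ← trinom M (M+1) (by omega)]
      _ = ∑ w ∈ range (M+1), M.choose w * 2^w * (M-w).choose ((M-w)/2) := by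
          apply Finset.sum_congr rfl
          intro w hw
          rw [mem_range] at hw
          have hwM : w ≤ M := by omega
          have hs : M + 1 - w = (M - w) + 1 := by omega
          rcases Nat.even_or_odd (M - w) with he | ho
          · rw [if_pos he, if_neg (by rw [hs, Nat.even_add_one]; exact fun h => h he), mul_zero, add_zero]
          · rw [if_neg (Nat.not_even_iff_odd.mpr ho), if_pos (by rw [hs, Nat.even_add_one]; exact Nat.not_even_iff_odd.mpr ho),
              mul_zero, zero_add]
            congr 1
            apply Nat.choose_symm_of_eq_add
            omega
  rw [key, ← Finset.sum_range_reflect]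
  apply Finset.sum_congr rfl
  intro j hj
  rw [mem_range] at hj
  have hjM : j ≤ M := by omega
  have h1 : M + 1 - 1 - j = M - j := by omega
  have h2 : M - (M - j) = j := by omega
  rw [h1, h2, Nat.choose_symm hjM]

lemma part1_nat (m : ℕ) :
    ∑ w ∈ Icc 1 (m+1), (m+1).choose w * 2^(m+2-w) * w * (w-1).choose ((w+1)/2 - 1)
      = (m+1) * (2*m+2).choose (m+1) := by
  rw [← Finset.Ico_add_one_right_eq_Icc, Finset.sum_Ico_eq_sum_range]
  have h1 : m + 1 + 1 - 1 = m + 1 := rfl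
  rw [h1]
  have h2 : ∀ k ∈ range (m+1), (m+1).choose (1+k) * 2^(m+2-(1+k)) * (1+k) * ((1+k)-1).choose (((1+k)+1)/2 - 1)
      = (m.choose k * 2^(m-k) * k.choose (k/2)) * (2 * (m+1)) := by
    intro k hk
    rw [mem_range] at hk
    have e1 : (1+k) - 1 = k := by omega
    have e2 : ((1+k)+1)/2 - 1 = k/2 := by omega
    have e3 : m+2-(1+k) = (m-k)+1 := by omega
    have e4 : 1 + k = k + 1 := by omega
    rw [e1, e2, e3, e4, pow_succ]
    have e5 : (m+1) * m.choose k = (m+1).choose (k+1) * (k+1) := Nat.add_one_mul_choose_eq m k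
    calc (m+1).choose (k+1) * (2^(m-k) * 2) * (k+1) * k.choose (k/2)
        = ((m+1).choose (k+1) * (k+1)) * (2^(m-k) * 2 * k.choose (k/2)) := by ring
      _ = ((m+1) * m.choose k) * (2^(m-k) * 2 * k.choose (k/2)) := by rw [e5]
      _ = m.choose k * 2^(m-k) * k.choose (k/2) * (2 * (m+1)) := by ring
  rw [Finset.sum_congr rfl h2, ← Finset.sum_mul, S_eq]
  have h3 : (2*m+2).choose (m+1) = 2 * (2*m+1).choose (m+1) := by
    have e : (2*m+2) = (2*m+1) + 1 := by omega
    rw [e, Nat.choose_succ_succ, Nat.choose_symm_half]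
    omega
  rw [h3]
  ring

-- transfer: counting z by their difference set with x
lemma card_filter_diff {n : ℕ} (x : Fin n → Bool) (q : Finset (Fin n) → Prop) [DecidablePred q] :
    (Finset.univ.filter fun z : Fin n → Bool => q (Finset.univ.filter fun j => x j ≠ z j)).card
      = (Finset.univ.filter q).card := by
  apply Finset.card_bij (fun z _ => Finset.univ.filter fun j => x j ≠ z j)
  · intro z hz
    rw [Finset.mem_filter] at hz ⊢
    exact ⟨Finset.mem_univ _, hz.2⟩
  · intro z1 h1 z2 h2 he
    funext j
    have hj := Finset.ext_iff.mp he j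
    simp only [Finset.mem_filter, Finset.mem_univ, true_and] at hj
    cases hx : x j <;> cases hz1 : z1 j <;> cases hz2 : z2 j <;> simp_all
  · intro D hD
    rw [Finset.mem_filter] at hD
    refine ⟨fun j => if j ∈ D then !(x j) else x j, ?_, ?_⟩
    · rw [Finset.mem_filter]
      refine ⟨Finset.mem_univ _, ?_⟩
      have : (Finset.univ.filter fun j => x j ≠ if j ∈ D then !(x j) else x j) = D := by
        ext j
        simp only [Finset.mem_filter, Finset.mem_univ, true_and]
        by_cases hj : j ∈ D <;> simp [hj]
      rw [this]
      exact hD.2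
    · ext j
      simp only [Finset.mem_filter, Finset.mem_univ, true_and]
      by_cases hj : j ∈ D <;> simp [hj]

lemma card_powerset_filter_le {α : Type*} [DecidableEq α] (s : Finset α) (t : ℕ) :
    ((s.powerset).filter fun D => D.card ≤ t).card = ∑ k ∈ range (t+1), s.card.choose k := by
  have h : (s.powerset).filter (fun D => D.card ≤ t)
      = (range (t+1)).biUnion (fun k => Finset.powersetCard k s) := by
    ext D
    simp only [Finset.mem_filter, Finset.mem_powerset, Finset.mem_biUnion, Finset.mem_range,
      Finset.mem_powersetCard, Nat.lt_succ_iff]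
    constructor
    · rintro ⟨h1, h2⟩; exact ⟨D.card, h2, h1, rfl⟩
    · rintro ⟨k, hk, h1, rfl⟩; exact ⟨h1, hk⟩
  rw [h, Finset.card_biUnion]
  · exact Finset.sum_congr rfl fun k _ => Finset.card_powersetCard k s
  · intro a _ b _ hab
    simp only [Finset.disjoint_left]
    intro D hDa hDb
    rw [Finset.mem_powersetCard] at hDa hDb
    exact hab (hDa.2 ▸ hDb.2.symm ▸ rfl)

lemma ball_card {n : ℕ} (x : Fin n → Bool) (t : ℕ) :
    (Finset.univ.filter fun z : Fin n → Bool => hammingDist x z ≤ t).card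
      = ∑ k ∈ range (t+1), n.choose k := by
  have h : (Finset.univ.filter fun z : Fin n → Bool => hammingDist x z ≤ t)
      = Finset.univ.filter fun z : Fin n → Bool =>
          (fun D : Finset (Fin n) => D.card ≤ t) (Finset.univ.filter fun j => x j ≠ z j) := rfl
  rw [h, card_filter_diff x (fun D => D.card ≤ t), ← Finset.powerset_univ, card_powerset_filter_le, Finset.card_univ,
    Fintype.card_fin]

lemma ball_card_eq {n : ℕ} (x : Fin n → Bool) (i : Fin n) (t : ℕ) :
    (Finset.univ.filter fun z : Fin n → Bool => z i = x i ∧ hammingDist x z ≤ t).card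
      = ∑ k ∈ range (t+1), (n-1).choose k := by
  have h : (Finset.univ.filter fun z : Fin n → Bool => z i = x i ∧ hammingDist x z ≤ t)
      = Finset.univ.filter fun z : Fin n → Bool =>
          (fun D : Finset (Fin n) => i ∉ D ∧ D.card ≤ t) (Finset.univ.filter fun j => x j ≠ z j) := by
    apply Finset.filter_congr
    intro z _
    simp only [Finset.mem_filter, Finset.mem_univ, true_and, not_not]
    constructor
    · rintro ⟨h1, h2⟩; exact ⟨h1.symm, h2⟩
    · rintro ⟨h1, h2⟩; exact ⟨h1.symm, h2⟩
  rw [h, card_filter_diff x (fun D => i ∉ D ∧ D.card ≤ t)]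
  have h2 : (Finset.univ.filter fun D : Finset (Fin n) => i ∉ D ∧ D.card ≤ t)
      = ((Finset.univ.erase i).powerset).filter fun D => D.card ≤ t := by
    ext D
    simp only [Finset.mem_filter, Finset.mem_univ, true_and, Finset.mem_powerset,
      Finset.subset_erase, Finset.subset_univ, true_and]

  rw [h2, card_powerset_filter_le, Finset.card_erase_of_mem (Finset.mem_univ i),
    Finset.card_univ, Fintype.card_fin]

lemma ball_card_split {n : ℕ} (x : Fin n → Bool) (i : Fin n) (t : ℕ) :
    (Finset.univ.filter fun z : Fin n → Bool => z i = x i ∧ hammingDist x z ≤ t).card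
      + (Finset.univ.filter fun z : Fin n → Bool => z i ≠ x i ∧ hammingDist x z ≤ t).card
      = (Finset.univ.filter fun z : Fin n → Bool => hammingDist x z ≤ t).card := by
  have h1 : ∀ (p : (Fin n → Bool) → Prop) [DecidablePred p],
      Finset.univ.filter (fun z : Fin n → Bool => p z ∧ hammingDist x z ≤ t)
        = (Finset.univ.filter fun z : Fin n → Bool => hammingDist x z ≤ t).filter p := by
    intro p _
    rw [Finset.filter_filter]
    apply Finset.filter_congr
    intro z _
    tauto
  rw [h1, h1]
  exact Finset.card_filter_add_card_filter_not _

lemma pascal_sum (N t : ℕ) :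
    ∑ k ∈ range (t+1), (N+1).choose k
      = ∑ k ∈ range (t+1), N.choose k + ∑ k ∈ range t, N.choose k := by
  induction t with
  | zero => simp
  | succ t ih =>
    rw [Finset.sum_range_succ, ih, Finset.sum_range_succ (fun k => N.choose k) (t+1),
      Finset.sum_range_succ (fun k => N.choose k) t, Nat.choose_succ_succ]
    ring

lemma sum_choose_sq (M : ℕ) :
    ∑ k ∈ range (M+1), (M.choose k)^2 = (2*M).choose M := by
  rw [two_mul, Nat.add_choose_eq, Finset.Nat.sum_antidiagonal_eq_sum_range_succ_mk]
  apply Finset.sum_congr rfl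
  intro k hk
  rw [mem_range] at hk
  rw [sq, Nat.choose_symm (by omega : k ≤ M)]
lemma choose_fact (m : ℕ) : (m+2)*((2*m+4).choose (m+2)) = 2*(2*m+3)*((2*m+2).choose (m+1)) := by
  have a1 : (2*m+4).choose (m+2) = (2*m+3).choose (m+1) + (2*m+3).choose (m+2) := by
    rw [show 2*m+4 = (2*m+3)+1 by omega]
    exact Nat.choose_succ_succ _ _
  have a2 : (2*m+3).choose (m+1) = (2*m+3).choose (m+2) := Nat.choose_symm_of_eq_add (by omega)
  have a3 : (2*m+3)*((2*m+2).choose (m+1)) = (2*m+3).choose (m+2) * (m+2) :=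
    Nat.add_one_mul_choose_eq (2*m+2) (m+1)
  calc (m+2)*((2*m+4).choose (m+2)) = (m+2)*(2*((2*m+3).choose (m+2))) := by rw [a1, a2]; ring
    _ = 2*((2*m+3).choose (m+2) * (m+2)) := by ring
    _ = 2*((2*m+3)*((2*m+2).choose (m+1))) := by rw [← a3]
    _ = 2*(2*m+3)*((2*m+2).choose (m+1)) := by ring

/-- The quadratic discrepancy of a code `Z ⊆ {0,1}^n`. -/
noncomputable def disc (n : ℕ) (Z : Finset (Fin n → Bool)) : ℝ :=
  ∑ t ∈ Finset.range (n + 1), ∑ x : Fin n → Bool,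
    ((Z.card : ℝ)⁻¹ * ((Z.filter (fun z => hammingDist x z ≤ t)).card : ℝ)
      - ((2 : ℝ) ^ n)⁻¹ *
          ((Finset.univ.filter (fun z : Fin n → Bool => hammingDist x z ≤ t)).card : ℝ)) ^ 2

lemma disc_eq (m : ℕ) (i : Fin (m+2)) :
    disc (m+2) (Finset.univ.filter fun z : Fin (m+2) → Bool => z i = false)
      = ((2*m+2).choose (m+1) : ℝ) / 2^(m+2) := by
  have hsub : m + 2 - 1 = m + 1 := by omega
  -- cardinality of the subcube
  have hZcard : (Finset.univ.filter fun z : Fin (m+2) → Bool => z i = false).card = 2^(m+1) := by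
    have h1 : (Finset.univ.filter fun z : Fin (m+2) → Bool => z i = false)
        = Finset.univ.filter fun z : Fin (m+2) → Bool =>
            z i = (fun _ : Fin (m+2) => false) i ∧ hammingDist (fun _ => false) z ≤ (m+2) := by
      apply Finset.filter_congr
      intro z _
      have hd : hammingDist (fun _ : Fin (m+2) => false) z ≤ m + 2 := by
        have := hammingDist_le_card_fintype (x := fun _ : Fin (m+2) => false) (y := z)
        simpa using this
      simp [hd]
    rw [h1, ball_card_eq (fun _ => false) i (m+2), hsub, Finset.sum_range_succ,
      Nat.sum_range_choose, Nat.choose_eq_zero_of_lt (show m+1 < m+2 by omega), Nat.add_zero]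
  -- the per-(t,x) term
  have key : ∀ t, ∀ x : Fin (m+2) → Bool,
      ((((Finset.univ.filter fun z : Fin (m+2) → Bool => z i = false).card : ℝ))⁻¹ *
          (((Finset.univ.filter fun z : Fin (m+2) → Bool => z i = false).filter
              (fun z => hammingDist x z ≤ t)).card : ℝ)
        - ((2:ℝ)^(m+2))⁻¹ *
          ((Finset.univ.filter fun z : Fin (m+2) → Bool => hammingDist x z ≤ t).card : ℝ))^2
      = ((((m+1).choose t : ℝ)) / 2^(m+2))^2 := by
    intro t x
    have hff : (Finset.univ.filter fun z : Fin (m+2) → Bool => z i = false).filter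
        (fun z => hammingDist x z ≤ t)
        = Finset.univ.filter fun z : Fin (m+2) → Bool => z i = false ∧ hammingDist x z ≤ t := by
      rw [Finset.filter_filter]
    set P : ℕ := ∑ k ∈ range (t+1), (m+1).choose k with hP
    set Q : ℕ := ∑ k ∈ range t, (m+1).choose k with hQ
    set B : ℕ := ∑ k ∈ range (t+1), (m+2).choose k with hB
    have hBPQ : B = P + Q := pascal_sum (m+1) t
    have hPQc : P = Q + (m+1).choose t := Finset.sum_range_succ _ t
    have hball : (Finset.univ.filter fun z : Fin (m+2) → Bool => hammingDist x z ≤ t).card = B :=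
      ball_card x t
    have h2pos : (0:ℝ) < 2^(m+1) := by positivity
    have h2pos2 : (0:ℝ) < 2^(m+2) := by positivity
    rw [hZcard, hff, hball]
    cases hxi : x i with
    | false =>
      have hc : (Finset.univ.filter fun z : Fin (m+2) → Bool => z i = false ∧ hammingDist x z ≤ t).card = P := by
        have he : (Finset.univ.filter fun z : Fin (m+2) → Bool => z i = false ∧ hammingDist x z ≤ t)
            = Finset.univ.filter fun z : Fin (m+2) → Bool => z i = x i ∧ hammingDist x z ≤ t := by
          apply Finset.filter_congr; intro z _; rw [hxi]
        rw [he, ball_card_eq x i t, hsub]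
      rw [hc]
      have : ((2:ℝ)^(m+1))⁻¹ * P - ((2:ℝ)^(m+2))⁻¹ * B = ((m+1).choose t : ℝ) / 2^(m+2) := by
        have hBr : (B:ℝ) = (P:ℝ) + (Q:ℝ) := by rw [hBPQ]; push_cast; ring
        have hPr : (P:ℝ) = (Q:ℝ) + ((m+1).choose t : ℝ) := by rw [hPQc]; push_cast; ring
        have h22 : (2:ℝ)^(m+2) = 2 * 2^(m+1) := by rw [pow_succ]; ring
        rw [hBr, hPr, h22]
        field_simp
        ring
      rw [← this]
      push_cast
      ring
    | true =>
      have hc : (Finset.univ.filter fun z : Fin (m+2) → Bool => z i = false ∧ hammingDist x z ≤ t).card = Q := by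
        have he : (Finset.univ.filter fun z : Fin (m+2) → Bool => z i = false ∧ hammingDist x z ≤ t)
            = Finset.univ.filter fun z : Fin (m+2) → Bool => z i ≠ x i ∧ hammingDist x z ≤ t := by
          apply Finset.filter_congr; intro z _; rw [hxi]; simp
        have hsplit := ball_card_split x i t
        rw [ball_card_eq x i t] at hsplit
        rw [hsub] at hsplit
        rw [ball_card x t] at hsplit
        rw [← hP] at hsplit
        rw [← hB] at hsplit
        rw [he]
        have h2 := hsplit.trans hBPQ
        exact Nat.add_left_cancel h2
      rw [hc]
      have : ((2:ℝ)^(m+1))⁻¹ * Q - ((2:ℝ)^(m+2))⁻¹ * B = -(((m+1).choose t : ℝ) / 2^(m+2)) := by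
        have hBr : (B:ℝ) = (P:ℝ) + (Q:ℝ) := by rw [hBPQ]; push_cast; ring
        have hPr : (P:ℝ) = (Q:ℝ) + ((m+1).choose t : ℝ) := by rw [hPQc]; push_cast; ring
        have h22 : (2:ℝ)^(m+2) = 2 * 2^(m+1) := by rw [pow_succ]; ring
        rw [hBr, hPr, h22]
        field_simp
        ring
      calc (((2^(m+1) : ℕ) : ℝ)⁻¹ * Q - ((2:ℝ)^(m+2))⁻¹ * B)^2
          = (((2:ℝ)^(m+1))⁻¹ * Q - ((2:ℝ)^(m+2))⁻¹ * B)^2 := by push_cast; ring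
        _ = (-(((m+1).choose t : ℝ) / 2^(m+2)))^2 := by rw [this]
        _ = (((m+1).choose t : ℝ) / 2^(m+2))^2 := by ring
  -- assemble
  unfold disc
  have hstep : ∀ t ∈ range (m+2+1),
      (∑ x : Fin (m+2) → Bool,
        ((((Finset.univ.filter fun z : Fin (m+2) → Bool => z i = false).card : ℝ))⁻¹ *
          (((Finset.univ.filter fun z : Fin (m+2) → Bool => z i = false).filter
              (fun z => hammingDist x z ≤ t)).card : ℝ)
        - ((2:ℝ)^(m+2))⁻¹ *
          ((Finset.univ.filter fun z : Fin (m+2) → Bool => hammingDist x z ≤ t).card : ℝ))^2)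
      = (((m+1).choose t : ℝ))^2 / 2^(m+2) := by
    intro t _
    rw [Finset.sum_congr rfl (fun x _ => key t x), Finset.sum_const, Finset.card_univ]
    have hcard : Fintype.card (Fin (m+2) → Bool) = 2^(m+2) := by
      rw [Fintype.card_fun, Fintype.card_bool, Fintype.card_fin]
    rw [hcard, nsmul_eq_mul]
    push_cast
    have h2 : (2:ℝ)^(m+2) ≠ 0 := by positivity
    field_simp
  rw [Finset.sum_congr rfl hstep]
  rw [← Finset.sum_div]
  congr 1
  have : ∑ t ∈ range (m+2+1), (((m+1).choose t : ℝ))^2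
      = ((∑ t ∈ range (m+2+1), ((m+1).choose t)^2 : ℕ) : ℝ) := by push_cast; ring
  rw [this]
  congr 1
  rw [Finset.sum_range_succ]
  have h0 : (m+1).choose (m+2) = 0 := Nat.choose_eq_zero_of_lt (Nat.lt_succ_self (m+1))
  rw [h0]
  have hs := sum_choose_sq (m+1)
  simp only [show 2*(m+1) = 2*m+2 by ring] at hs
  simpa using hs

/-- statement as given -/
theorem discrepancy_subcube (n : ℕ) (hn : 2 ≤ n) :
    (∑ w ∈ Finset.Icc 1 (n - 1),
        (Nat.choose (n - 1) w : ℝ) * 2 ^ (n - w) * w * Nat.choose (w - 1) ((w + 1) / 2 - 1)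
      = ((n : ℝ) - 1) * Nat.choose (2 * n - 2) (n - 1))
    ∧ disc n (Finset.univ.filter
        (fun z : Fin n → Bool => z ⟨n - 1, by omega⟩ = false))
      = (n : ℝ) / 2 ^ (n + 1) * Nat.choose (2 * n) n
        - ((n : ℝ) - 1) / 2 ^ (n - 1) * Nat.choose (2 * n - 2) (n - 1) := by
  obtain ⟨m, rfl⟩ : ∃ m, n = m + 2 := ⟨n - 2, by omega⟩
  have e1 : m + 2 - 1 = m + 1 := by omega
  have e2 : 2 * (m + 2) - 2 = 2 * m + 2 := by omega
  have e3 : 2 * (m + 2) = 2 * m + 4 := by ring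
  constructor
  · simp only [e1, e2]
    have h := part1_nat m
    have hc := congrArg (Nat.cast : ℕ → ℝ) h
    push_cast at hc
    push_cast
    calc ∑ w ∈ Finset.Icc 1 (m+1),
          ((m+1).choose w : ℝ) * 2 ^ (m + 2 - w) * w * ((w-1).choose ((w+1)/2 - 1))
        = ((m:ℝ)+1) * ((2*m+2).choose (m+1)) := hc
      _ = ((m:ℝ) + 2 - 1) * ((2*m+2).choose (m+1)) := by ring
  · rw [disc_eq m]
    simp only [e1, e2, e3]
    have hf := congrArg (Nat.cast : ℕ → ℝ) (choose_fact m)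
    push_cast at hf
    have p1 : (2:ℝ)^(m+2+1) = 2^m * 8 := by rw [show m+2+1 = m+3 by omega, pow_add]; norm_num
    have p2 : (2:ℝ)^(m+2) = 2^m * 4 := by rw [pow_add]; norm_num
    have p3 : (2:ℝ)^(m+1) = 2^m * 2 := by rw [pow_add]; norm_num
    rw [p1, p2, p3]
    have hm : (2:ℝ)^m ≠ 0 := by positivity
    push_cast
    field_simp
    nlinarith [hf, sq_nonneg ((2:ℝ)^m)]
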